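/- Let Γ be a topological group with a continuous character χ : Γ → Z_p^×, acting continuously and semilinearly on an abelian topological group W, and let γ ∈ Γ. Suppose ϑ is an endomorphism of W such that γ∘ϑ = χ(γ)·ϑ∘γ for all γ ∈ Γ, and suppose φ(w) = lim_{j→∞} (γ^{p^j}w - w)/(p^j · log χ(γ)) exists for all w ∈ W and defines an additive endomorphism φ. Then φ∘ϑ - ϑ∘φ = ϑ. -/

import Mathlib

open Filter Topology

/-- Let `Γ` be a group with a character `χ : Γ → ℤ_p^×`, acting
continuously on a topological `ℚ_p`-vector space `W`, and let `γ ∈ Γ` with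
`L = log χ(γ) ≠ 0` (characterized by `L = lim (χ(γ)^{p^j} - 1)/p^j`).  Suppose `ϑ` is a
continuous endomorphism of `W` with `g ∘ ϑ = χ(g)·ϑ ∘ g` for all `g ∈ Γ`, and that
`φ(w) = lim_{j→∞} (γ^{p^j} w - w)/(p^j · L)` exists for all `w` and defines an additive
endomorphism `φ`.  Then `φ ∘ ϑ - ϑ ∘ φ = ϑ`. -/
theorem stmt15 (p : ℕ) [Fact p.Prime]
    {W : Type*} [AddCommGroup W] [Module ℚ_[p] W]
    [TopologicalSpace W] [IsTopologicalAddGroup W] [ContinuousSMul ℚ_[p] W] [T2Space W]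
    {Γ : Type*} [Group Γ] [DistribMulAction Γ W]
    (χ : Γ →* ℤ_[p]ˣ)
    -- the action is `χ`-semilinear against `ϑ` : `g • ϑ(w) = χ(g) • ϑ(g • w)`
    (ϑ : W →L[ℚ_[p]] W)
    (hsemi : ∀ (g : Γ) (w : W),
      g • (ϑ w) = (((χ g : ℤ_[p]) : ℚ_[p])) • ϑ (g • w))
    (γ : Γ) (L : ℚ_[p]) (hL0 : L ≠ 0)
    -- `L = log χ(γ)`, characterized as the limit of `(χ(γ)^{p^j} - 1)/p^j`
    (hL : Tendsto (fun j : ℕ =>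
        ((((χ γ : ℤ_[p]) : ℚ_[p])) ^ (p ^ j) - 1) / (p : ℚ_[p]) ^ j) atTop (𝓝 L))
    -- the action of `γ^{p^j}` converges to the identity pointwise (continuity)
    (hact : ∀ w : W, Tendsto (fun j : ℕ => (γ ^ (p ^ j)) • w) atTop (𝓝 w))
    (φ : W → W)
    (hφ_add : ∀ w w' : W, φ (w + w') = φ w + φ w')
    -- `φ(w) = lim (γ^{p^j} • w - w) / (p^j · L)`
    (hφ : ∀ w : W, Tendsto (fun j : ℕ =>
        (L * (p : ℚ_[p]) ^ j)⁻¹ • ((γ ^ (p ^ j)) • w - w)) atTop (𝓝 (φ w))) :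
    ∀ w : W, φ (ϑ w) - ϑ (φ w) = ϑ w := by
  intro w
  set c : ℚ_[p] := ((χ γ : ℤ_[p]) : ℚ_[p]) with hc
  -- key semilinearity for powers
  have key : ∀ j : ℕ, (γ ^ (p ^ j)) • (ϑ w) = c ^ (p ^ j) • ϑ ((γ ^ (p ^ j)) • w) := by
    intro j
    have h := hsemi (γ ^ (p ^ j)) w
    simpa [hc, map_pow] using h
  -- the scalar tendsto : (c^{p^j}-1)/(L * p^j) → 1
  have hscal : Tendsto (fun j : ℕ => (c ^ (p ^ j) - 1) / (L * (p : ℚ_[p]) ^ j))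
      atTop (𝓝 1) := by
    have h1 : Tendsto (fun j : ℕ => ((c ^ (p ^ j) - 1) / (p : ℚ_[p]) ^ j) / L)
        atTop (𝓝 (L / L)) := hL.div_const L
    rw [div_self hL0] at h1
    refine h1.congr fun j => ?_
    rw [div_div, mul_comm]
  -- first term tends to ϑ w
  have ht1 : Tendsto (fun j : ℕ =>
      ((c ^ (p ^ j) - 1) / (L * (p : ℚ_[p]) ^ j)) • ϑ ((γ ^ (p ^ j)) • w))
      atTop (𝓝 (ϑ w)) := by
    have h2 : Tendsto (fun j : ℕ => ϑ ((γ ^ (p ^ j)) • w)) atTop (𝓝 (ϑ w)) :=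
      (ϑ.continuous.tendsto w).comp (hact w)
    simpa using hscal.smul h2
  -- second term tends to ϑ (φ w)
  have ht2 : Tendsto (fun j : ℕ =>
      ϑ ((L * (p : ℚ_[p]) ^ j)⁻¹ • ((γ ^ (p ^ j)) • w - w))) atTop (𝓝 (ϑ (φ w))) :=
    (ϑ.continuous.tendsto (φ w)).comp (hφ w)
  -- the defining sequence for φ (ϑ w) equals the sum of the two terms
  have hsum : Tendsto (fun j : ℕ =>
      (L * (p : ℚ_[p]) ^ j)⁻¹ • ((γ ^ (p ^ j)) • (ϑ w) - ϑ w))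
      atTop (𝓝 (ϑ w + ϑ (φ w))) := by
    refine (ht1.add ht2).congr fun j => ?_
    rw [key j, ContinuousLinearMap.map_smul, map_sub, div_eq_mul_inv, mul_comm, mul_smul]
    generalize ϑ (γ ^ p ^ j • w) = u
    generalize (L * (p : ℚ_[p]) ^ j)⁻¹ = a
    module
  have := tendsto_nhds_unique (hφ (ϑ w)) hsum
  rw [this]; abel
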